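/- Let A be a finite poset and let C, C' be posets with A ⊕ C ≅ A ⊕ C'. Then C ≅ C'. (Cancellation of a finite past across an ordinal sum.) -/

import Mathlib

private lemma aux_inr_to_inr {A C C' : Type} [PartialOrder A] [Fintype A]
    [PartialOrder C] [PartialOrder C']
    (f : (A ⊕ₗ C) ≃o (A ⊕ₗ C')) (c : C) :
    ∃ c', f (toLex (Sum.inr c)) = toLex (Sum.inr c') := by
  rcases hx : ofLex (f (toLex (Sum.inr c))) with a0 | c'
  swap
  · exact ⟨c', by rw [← hx]; rfl⟩
  · exfalso
    have hfc : f (toLex (Sum.inr c)) = toLex (Sum.inl a0) := by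
      rw [← hx]; rfl
    have hmap : ∀ a : A, ∃ b : A, f (toLex (Sum.inl a)) = toLex (Sum.inl b) := by
      intro a
      have hle : f (toLex (Sum.inl a)) ≤ toLex (Sum.inl a0) := by
        rw [← hfc]; exact f.monotone (Sum.Lex.inl_le_inr a c)
      rcases hy : ofLex (f (toLex (Sum.inl a))) with b | c''
      · exact ⟨b, by rw [← hy]; rfl⟩
      · exfalso
        have : f (toLex (Sum.inl a)) = toLex (Sum.inr c'') := by rw [← hy]; rfl
        rw [this] at hle
        exact Sum.Lex.not_inr_le_inl hle
    choose g hg using hmap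
    -- injection Option A → A
    have hInj : Function.Injective (fun o : Option A => o.elim a0 g) := by
      intro o1 o2 he
      match o1, o2 with
      | none, none => rfl
      | some a, none =>
          exfalso
          simp only [Option.elim] at he
          have : f (toLex (Sum.inl a)) = f (toLex (Sum.inr c)) := by
            rw [hg a, hfc, he]
          exact absurd (f.injective this) (by intro h; exact Sum.inl_ne_inr (toLex.injective h))
      | none, some a =>
          exfalso
          simp only [Option.elim] at he
          have : f (toLex (Sum.inl a)) = f (toLex (Sum.inr c)) := by
            rw [hg a, hfc, he]
          exact absurd (f.injective this) (by intro h; exact Sum.inl_ne_inr (toLex.injective h))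
      | some a, some b =>
          simp only [Option.elim] at he
          have : f (toLex (Sum.inl a)) = f (toLex (Sum.inl b)) := by
            rw [hg a, hg b, he]
          exact congrArg some (Sum.inl_injective (toLex.injective (f.injective this)))
    have := Fintype.card_le_of_injective _ hInj
    simp [Fintype.card_option] at this

/-- Cancellation of a finite past across an ordinal sum: if `A` is a finite
poset and `A ⊕ C ≅ A ⊕ C'` for (finite or countably infinite) posets
`C`, `C'`, then `C ≅ C'`. -/
theorem ordinal_sum_cancel {A C C' : Type} [PartialOrder A] [Fintype A]
    [PartialOrder C] [Countable C] [PartialOrder C'] [Countable C']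
    (h : Nonempty ((A ⊕ₗ C) ≃o (A ⊕ₗ C'))) :
    Nonempty (C ≃o C') := by
  obtain ⟨f⟩ := h
  choose g hg using aux_inr_to_inr f
  choose g' hg' using aux_inr_to_inr f.symm
  have hgg' : ∀ c, g' (g c) = c := by
    intro c
    have := hg' (g c)
    rw [← hg c, f.symm_apply_apply] at this
    have := toLex.injective this.symm
    exact (Sum.inr.injEq _ _).mp this
  have hg'g : ∀ c', g (g' c') = c' := by
    intro c'
    have := hg (g' c')
    rw [← hg' c', f.apply_symm_apply] at this
    have := toLex.injective this.symm
    exact (Sum.inr.injEq _ _).mp this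
  refine ⟨⟨⟨g, g', hgg', hg'g⟩, ?_⟩⟩
  intro c d
  simp only [Equiv.coe_fn_mk]
  rw [← Sum.Lex.inr_le_inr_iff (α := A), ← hg c, ← hg d, f.le_iff_le,
    Sum.Lex.inr_le_inr_iff]
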